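/- arXiv:1608.05525 — 4 statements merged into one kernel-verified Lean document; each statement's English description precedes it below -/
import Mathlib

section
/- Let λ be a primitive q-th root of unity in ℂ with q odd, and let k be a positive integer coprime with q. Then the product of δ_{k-1}(λ^{2j-1}) over all j with 1 ≤ j ≤ q and j ≠ (q+1)/2 equals 1, where δ_{k-1}(b) = 1 + b + ... + b^{k-1}. -/
/-- δ_k(b) = 1 + b + ... + b^k -/
noncomputable def delta (k : ℕ) (b : ℂ) : ℂ := ∑ i ∈ Finset.range (k + 1), b ^ i

theorem prod_delta_eq_one (q k : ℕ) (hq : Odd q) (hq1 : 0 < q)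
    (hk : 0 < k) (hkq : Nat.Coprime k q) (lam : ℂ) (hlam : IsPrimitiveRoot lam q) :
    ∏ j ∈ (Finset.Icc 1 q).erase ((q + 1) / 2), delta (k - 1) (lam ^ (2 * j - 1)) = 1 := by
  classical
  haveI : NeZero q := ⟨hq1.ne'⟩
  -- powers of lam reduce mod q
  have hpow : ∀ n : ℕ, lam ^ n = lam ^ (n % q) := by
    intro n
    conv_lhs => rw [← Nat.div_add_mod n q]
    rw [pow_add, pow_mul, hlam.pow_eq_one, one_pow, one_mul]
  have hpow2 : ∀ a b : ℕ, a ≡ b [MOD q] → lam ^ a = lam ^ b := by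
    intro a b h
    rw [hpow a, hpow b, h]
  -- the index map into ZMod q
  set f : ℕ → ZMod q := fun j => ((2 * j - 1 : ℕ) : ZMod q) with hf
  have hcop2 : Nat.Coprime 2 q := hq.coprime_two_left
  have hinj : Set.InjOn f (Finset.Icc 1 q) := by
    intro a ha b hb hab
    simp only [Finset.coe_Icc, Set.mem_Icc] at ha hb
    simp only [hf, ZMod.natCast_eq_natCast_iff] at hab
    have h1 : 2 * a ≡ 2 * b [MOD q] := by
      have := hab.add_right 1
      rwa [Nat.sub_add_cancel (by omega), Nat.sub_add_cancel (by omega)] at this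
    have h2 : a ≡ b [MOD q] := Nat.ModEq.cancel_left_of_coprime (Nat.coprime_comm.mp hcop2) h1
    have h3 : a - 1 ≡ b - 1 [MOD q] := by
      have := h2
      have ha1 : a - 1 + 1 = a := by omega
      have hb1 : b - 1 + 1 = b := by omega
      rw [← ha1, ← hb1] at this
      exact Nat.ModEq.add_right_cancel' 1 this
    have : a - 1 = b - 1 := Nat.ModEq.eq_of_lt_of_lt h3 (by omega) (by omega)
    omega
  have hhalf_mem : (q + 1) / 2 ∈ Finset.Icc 1 q := by
    simp only [Finset.mem_Icc]; omega
  have hhalf : f ((q + 1) / 2) = 0 := by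
    obtain ⟨m, hm⟩ := hq
    have : 2 * ((q + 1) / 2) - 1 = q := by omega
    simp [hf, this]
  -- reindex the product over ZMod q \ {0}
  have step1 : ∏ j ∈ (Finset.Icc 1 q).erase ((q + 1) / 2),
      delta (k - 1) (lam ^ (2 * j - 1)) =
      ∏ x ∈ (Finset.univ : Finset (ZMod q)).erase 0,
        delta (k - 1) (lam ^ (x.val)) := by
    apply Finset.prod_nbij f
    · intro a ha
      obtain ⟨hane, haI⟩ := Finset.mem_erase.mp ha
      refine Finset.mem_erase.mpr ⟨?_, Finset.mem_univ _⟩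
      intro h0
      exact hane (hinj haI hhalf_mem (by rw [h0, hhalf]))
    · intro a ha b hb hab
      exact hinj (Finset.mem_of_mem_erase ha) (Finset.mem_of_mem_erase hb) hab
    · -- surjectivity
      intro x hx
      simp only [Finset.coe_erase, Set.mem_diff, Finset.coe_univ, Set.mem_univ,
        Set.mem_singleton_iff, true_and] at hx
      have hcard : (Finset.univ : Finset (ZMod q)).card ≤ (Finset.Icc 1 q).card := by
        simp [ZMod.card, Nat.card_Icc]
      obtain ⟨a, ha, hax⟩ := Finset.surj_on_of_inj_on_of_card_le (fun a _ => f a)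
        (fun a _ => Finset.mem_univ _) (fun a₁ a₂ h₁ h₂ h => hinj h₁ h₂ h) hcard x
        (Finset.mem_univ x)
      refine ⟨a, ?_, hax.symm⟩
      simp only [Finset.coe_erase, Set.mem_diff, Set.mem_singleton_iff]
      refine ⟨Finset.mem_coe.mpr ha, ?_⟩
      intro h
      rw [h, hhalf] at hax
      exact hx hax
    · intro a ha
      have ha1 : 1 ≤ a := (Finset.mem_Icc.mp (Finset.mem_of_mem_erase ha)).1
      congr 1
      rw [hpow (2 * a - 1)]
      congr 1
      simp [hf, ZMod.val_natCast]
  rw [step1]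
  -- now the product over nonzero elements of ZMod q
  set P : ℂ := ∏ x ∈ (Finset.univ : Finset (ZMod q)).erase 0, (lam ^ (x.val) - 1) with hP
  have hPne : P ≠ 0 := by
    rw [hP]
    apply Finset.prod_ne_zero_iff.mpr
    intro x hx
    obtain ⟨hx0, -⟩ := Finset.mem_erase.mp hx
    have hvpos : 0 < x.val := by
      refine Nat.pos_of_ne_zero fun h => hx0 (ZMod.val_eq_zero x |>.mp h)
    exact sub_ne_zero.mpr (hlam.pow_ne_one_of_pos_of_lt hvpos.ne' (ZMod.val_lt x))
  have hu : IsUnit ((k : ZMod q)) := by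
    exact (ZMod.unitOfCoprime k hkq).isUnit
  obtain ⟨u, hu⟩ := hu
  -- key computation
  have key : (∏ x ∈ (Finset.univ : Finset (ZMod q)).erase 0,
      delta (k - 1) (lam ^ (x.val))) * P = P := by
    rw [hP, ← Finset.prod_mul_distrib]
    have hfac : ∀ x : ZMod q, delta (k - 1) (lam ^ x.val) * (lam ^ x.val - 1)
        = lam ^ (((k : ZMod q) * x).val) - 1 := by
      intro x
      have hk1 : k - 1 + 1 = k := by omega
      rw [delta, hk1, geom_sum_mul, ← pow_mul]
      congr 1
      apply hpow2
      calc x.val * k ≡ x.val * (k % q) [MOD q] :=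
            Nat.ModEq.mul_left _ (Nat.mod_modEq k q).symm
        _ = (k % q) * x.val := by ring
        _ ≡ ((k % q) * x.val) % q [MOD q] := (Nat.mod_modEq _ q).symm
        _ = ((k : ZMod q) * x).val := by rw [ZMod.val_mul, ZMod.val_natCast]
    rw [Finset.prod_congr rfl (fun x _ => hfac x)]
    -- reindex by multiplication by the unit k
    apply Finset.prod_nbij' (fun x => (k : ZMod q) * x) (fun x => (↑u⁻¹ : ZMod q) * x)
    · intro a ha
      obtain ⟨ha0, -⟩ := Finset.mem_erase.mp ha
      refine Finset.mem_erase.mpr ⟨?_, Finset.mem_univ _⟩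
      intro h0
      apply ha0
      have := congrArg (fun z => (↑u⁻¹ : ZMod q) * z) h0
      simp only [← hu, Units.inv_mul_cancel_left, mul_zero] at this
      exact this
    · intro a ha
      obtain ⟨ha0, -⟩ := Finset.mem_erase.mp ha
      refine Finset.mem_erase.mpr ⟨?_, Finset.mem_univ _⟩
      intro h0
      apply ha0
      have := congrArg (fun z => (↑u : ZMod q) * z) h0
      simp only [Units.mul_inv_cancel_left, mul_zero] at this
      exact this
    · intro a _
      show (↑u⁻¹ : ZMod q) * ((k : ZMod q) * a) = a
      rw [← hu, Units.inv_mul_cancel_left]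
    · intro a _
      show (k : ZMod q) * ((↑u⁻¹ : ZMod q) * a) = a
      rw [← hu, Units.mul_inv_cancel_left]
    · intro a _
      rfl
  calc (∏ x ∈ (Finset.univ : Finset (ZMod q)).erase 0, delta (k - 1) (lam ^ (x.val)))
      = (∏ x ∈ (Finset.univ : Finset (ZMod q)).erase 0,
          delta (k - 1) (lam ^ (x.val))) * P * P⁻¹ := by
        field_simp
    _ = P * P⁻¹ := by rw [key]
    _ = 1 := mul_inv_cancel₀ hPne
end

section
/- Let a ∈ ℂ satisfy a^{4mn−1} = 1, where m, n are positive integers. Then (a^m + a^{1−4mn})(a^{2mn} + 1) · δ_{m−1}(a) · δ_{n−1}(a^{2m}) = δ_{4mn−1}(a), where δ_k(b) = 1 + b + ... + b^k. -/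
lemma geomprod (k l : ℕ) (b : ℂ) :
    (∑ i ∈ Finset.range k, b ^ i) * (∑ j ∈ Finset.range l, (b ^ k) ^ j)
      = ∑ t ∈ Finset.range (k * l), b ^ t := by
  induction l with
  | zero => simp
  | succ l ih =>
    rw [Finset.sum_range_succ, mul_add, ih, Nat.mul_succ, Finset.sum_range_add]
    congr 1
    rw [Finset.sum_mul]
    apply Finset.sum_congr rfl
    intro i _
    rw [← pow_mul, ← pow_add, Nat.add_comm]

theorem delta_telescoping (m n : ℕ) (hm : 0 < m) (hn : 0 < n) (a : ℂ)
    (ha : a ^ (4 * m * n - 1) = 1) :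
    (a ^ m + a ^ (1 - 4 * (m : ℤ) * n)) * (a ^ (2 * m * n) + 1) *
        delta (m - 1) a * delta (n - 1) (a ^ (2 * m)) = delta (4 * m * n - 1) a := by
  have hmn' : 1 ≤ m * n := Nat.one_le_iff_ne_zero.mpr (Nat.mul_ne_zero hm.ne' hn.ne')
  have hmn : 1 ≤ 4 * m * n := by rw [Nat.mul_assoc]; omega
  have ha0 : a ≠ 0 := by
    intro h
    rw [h, zero_pow (by rw [Nat.mul_assoc]; omega)] at ha
    simp at ha
  have hz : a ^ (1 - 4 * (m : ℤ) * n) = 1 := by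
    have : (1 - 4 * (m : ℤ) * n) = -((4 * m * n - 1 : ℕ) : ℤ) := by push_cast [hmn]; ring
    rw [this, zpow_neg, zpow_natCast, ha, inv_one]
  rw [hz]
  unfold delta
  rw [Nat.sub_add_cancel hm, Nat.sub_add_cancel hn, Nat.sub_add_cancel hmn]
  have h1 : (∑ i ∈ Finset.range m, a ^ i) * (a ^ m + 1)
      = ∑ i ∈ Finset.range (2 * m), a ^ i := by
    have := geomprod m 2 a
    simp [Finset.sum_range_succ] at this
    rw [mul_comm m 2] at this
    linear_combination this
  have h2 : (∑ i ∈ Finset.range (2 * m), a ^ i) * (∑ j ∈ Finset.range n, (a ^ (2 * m)) ^ j)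
      = ∑ t ∈ Finset.range (2 * m * n), a ^ t := geomprod (2 * m) n a
  have h3 : (∑ t ∈ Finset.range (2 * m * n), a ^ t) * (a ^ (2 * m * n) + 1)
      = ∑ t ∈ Finset.range (4 * m * n), a ^ t := by
    have := geomprod (2 * m * n) 2 a
    simp [Finset.sum_range_succ] at this
    rw [show 4 * m * n = 2 * m * n * 2 by ring, ← this]; ring
  calc (a ^ m + 1) * (a ^ (2 * m * n) + 1) * (∑ i ∈ Finset.range m, a ^ i) *
        (∑ j ∈ Finset.range n, (a ^ (2 * m)) ^ j)
      = ((∑ i ∈ Finset.range m, a ^ i) * (a ^ m + 1)) *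
        (∑ j ∈ Finset.range n, (a ^ (2 * m)) ^ j) * (a ^ (2 * m * n) + 1) := by ring
    _ = ∑ t ∈ Finset.range (4 * m * n), a ^ t := by rw [h1, h2, h3]
end

section
/- Let M ∈ SL(2,ℂ) be the matrix [[0,1],[−1,0]] (eigenvalues ±i). Then for the 2N-dimensional irreducible representation σ_{2N} of SL(2,ℂ), det(σ_{2N}(M) − I) = 2^N. -/
open Complex

/-- `M = [[0,1],[-1,0]] ∈ SL(2,ℂ)` has eigenvalues `±i`, so `σ_{2N}(M)` has eigenvalues
`i^{±(2j-1)}` for `j = 1, …, N`, and `det (σ_{2N}(M) - 1) = ∏_{j=1}^N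
(i^(2j-1) - 1)(i^(-(2j-1)) - 1) = 2^N`. -/
theorem det_sigma2N_rotation_sub_one (N : ℕ) :
    ∏ j ∈ Finset.Icc 1 N,
        ((I ^ (2 * j - 1) - 1) * (I ^ (-(2 * (j : ℤ) - 1)) - 1)) = 2 ^ N := by
  have h : ∀ j ∈ Finset.Icc 1 N,
      ((I ^ (2 * j - 1) - 1) * (I ^ (-(2 * (j : ℤ) - 1)) - 1)) = 2 := by
    intro j hj
    simp only [Finset.mem_Icc] at hj
    obtain ⟨k, rfl⟩ : ∃ k, j = k + 1 := ⟨j - 1, by omega⟩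
    have h1 : 2 * (k + 1) - 1 = 2 * k + 1 := by omega
    have h2 : (-(2 * ((k + 1 : ℕ) : ℤ) - 1)) = -((2 * k + 1 : ℕ) : ℤ) := by
      push_cast; ring
    rw [h1, h2, zpow_neg, zpow_natCast]
    have h3 : I ^ (2 * k + 1) = (-1) ^ k * I := by
      rw [pow_succ, pow_mul, I_sq]
    rw [h3]
    rcases Nat.even_or_odd k with he | ho
    · rw [he.neg_one_pow]
      rw [one_mul, inv_I]
      ring_nf
      rw [I_sq]; ring
    · rw [ho.neg_one_pow]
      simp only [neg_one_mul, inv_neg, inv_I, neg_neg]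
      ring_nf
      rw [I_sq]; ring
  rw [Finset.prod_congr rfl h, Finset.prod_const, Nat.card_Icc]
  simp
end

section
/- For positive integers m, n and a ∈ ℂ* with a^{4mn−1} = 1 and a ≠ 1, the determinant of the 4×4 block matrix [[δ_{m−1}(a)·[[−1, t a^{1−m}],[−t, −a^{1−m}]], [[a^{−m},0],[0,a^m]]], [[[0, t a^{2mn}],[−t a^{−2mn}, 0]], δ_{n−1}(a^{2m})·[[a^{−2mn}, −t a^{2m}],[t a^{−2mn}, a^{2m}]]]] equals a^{1+m−2mn}(δ_{m−1}(a)δ_{n−1}(a^{2m}))^2 (t^2+1)^2, as a polynomial identity in t. -/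
theorem fox_jacobian_det (m n : ℕ) (hm : 0 < m) (hn : 0 < n) (a : ℂ)
    (ha : a ^ (4 * m * n - 1) = 1) (ha1 : a ≠ 1) (t : ℂ) :
    Matrix.det
      !![delta (m - 1) a * (-1), delta (m - 1) a * (t * a ^ (1 - (m : ℤ))),
           a ^ (-(m : ℤ)), 0;
         delta (m - 1) a * (-t), delta (m - 1) a * (-(a ^ (1 - (m : ℤ)))),
           0, a ^ m;
         0, t * a ^ (2 * m * n),
           delta (n - 1) (a ^ (2 * m)) * (a ^ (-(2 * (m : ℤ) * n))),
           delta (n - 1) (a ^ (2 * m)) * (-(t * a ^ (2 * m)));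
         -(t * a ^ (-(2 * (m : ℤ) * n))), 0,
           delta (n - 1) (a ^ (2 * m)) * (t * a ^ (-(2 * (m : ℤ) * n))),
           delta (n - 1) (a ^ (2 * m)) * (a ^ (2 * m))]
      = a ^ (1 + (m : ℤ) - 2 * m * n) *
          (delta (m - 1) a * delta (n - 1) (a ^ (2 * m))) ^ 2 * (t ^ 2 + 1) ^ 2 := by
  have hmn : 0 < 4 * m * n := by positivity
  have ha0 : a ≠ 0 := by
    intro h
    have h2 : 4 ≤ 4 * m * n := by
      calc 4 = 4 * 1 * 1 := rfl
        _ ≤ 4 * m * n := Nat.mul_le_mul (Nat.mul_le_mul_left 4 hm) hn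
    rw [h, zero_pow (by omega : 4 * m * n - 1 ≠ 0)] at ha
    exact zero_ne_one ha
  have h4 : a ^ (4 * m * n) = a := by
    rw [show 4 * m * n = (4 * m * n - 1) + 1 by omega, pow_succ, ha, one_mul]
  have hya : (a ^ (2 * m * n)) ^ 2 = a := by
    rw [← pow_mul, show 2 * m * n * 2 = 4 * m * n by ring]; exact h4
  have hx2 : a ^ (2 * m) = (a ^ m) ^ 2 := by rw [← pow_mul, mul_comm]
  have hD : delta (m - 1) a * (a - 1) = a ^ m - 1 := by
    unfold delta; rw [Nat.sub_add_cancel hm]; exact geom_sum_mul a m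
  have hE : delta (n - 1) (a ^ (2 * m)) * (a ^ (2 * m) - 1) = a ^ (2 * m * n) - 1 := by
    unfold delta; rw [Nat.sub_add_cancel hn, geom_sum_mul, ← pow_mul]
  have hK : delta (m - 1) a * delta (n - 1) (a ^ (2 * m)) *
      ((a ^ m + 1) * (a ^ (2 * m * n) + 1)) = 1 := by
    have hsub : a - 1 ≠ 0 := sub_ne_zero.mpr ha1
    apply mul_right_cancel₀ hsub
    linear_combination delta (n - 1) (a ^ (2 * m)) * (a ^ m + 1) * (a ^ (2 * m * n) + 1) * hD
      + (a ^ (2 * m * n) + 1) * hE + hya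
      - delta (n - 1) (a ^ (2 * m)) * (a ^ (2 * m * n) + 1) * hx2
  have hx0 : a ^ m ≠ 0 := pow_ne_zero _ ha0
  have hy0 : a ^ (2 * m * n) ≠ 0 := pow_ne_zero _ ha0
  have e1 : a ^ (-(m : ℤ)) = (a ^ m)⁻¹ := by rw [zpow_neg, zpow_natCast]
  have e2 : a ^ (1 - (m : ℤ)) = a * (a ^ m)⁻¹ := by
    rw [zpow_sub₀ ha0, zpow_one, zpow_natCast, div_eq_mul_inv]
  have e3 : a ^ (-(2 * (m : ℤ) * n)) = (a ^ (2 * m * n))⁻¹ := by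
    rw [show -(2 * (m : ℤ) * n) = -((2 * m * n : ℕ) : ℤ) by push_cast; ring, zpow_neg,
      zpow_natCast]
  have e4 : a ^ (1 + (m : ℤ) - 2 * m * n) = a * a ^ m * (a ^ (2 * m * n))⁻¹ := by
    rw [zpow_sub₀ ha0, zpow_add₀ ha0, zpow_one, zpow_natCast,
      show (2 * (m : ℤ) * n) = ((2 * m * n : ℕ) : ℤ) by push_cast; ring, zpow_natCast,
      div_eq_mul_inv]
  set D := delta (m - 1) a with hDdef
  set E := delta (n - 1) (a ^ (2 * m)) with hEdef
  simp only [e1, e2, e3, e4, hx2]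
  simp [Matrix.det_succ_row_zero, Fin.sum_univ_succ,
    show ((1:Fin 4).succAbove 2) = 3 from rfl, show ((2:Fin 4).succAbove 2) = 3 from rfl,
    show (Fin.castSucc (2 : Fin 3) : Fin 4) = 2 from rfl,
    show ((3:Fin 4).succAbove 2) = 2 from rfl, show ((0:Fin 4).succAbove 2) = 3 from rfl]

  set y := a ^ (2 * m * n) with hydef
  set x := a ^ m with hxdef
  clear_value D E y x
  rw [← hya]
  field_simp
  have hXY : x ^ 3 * x⁻¹ ^ 3 * (y ^ 5 * y⁻¹ ^ 5) = 1 := by field_simp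
  linear_combination (-t^2) * hK
end
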